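/- arXiv:2211.14593 — 2 statements merged into one kernel-verified Lean document; each statement's English description precedes it below -/
import Mathlib

section
/- Positive semidefiniteness of FBDF quadrature weights: let $(\omega_k^{(\gamma)})$ be the Taylor coefficients of $(1-x)^{\gamma}$ for $\gamma \in (-1,1)$ (the first-order backward difference generating function). Then for every $n \ge 1$ and every vector $(u^0, \dots, u^{n-1}) \in \mathbb{R}^n$, $\sum_{k=0}^{n-1} u^k \sum_{j=0}^{k} \omega_{k-j}^{(\gamma)} u^j \ge 0$. -/
open Finset Polynomial

/-- Coefficients of `(1-x)^γ`: `ω_k = (-1)^k (γ choose k)` with the generalized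
binomial coefficient `(γ choose k) = (∏_{i<k}(γ-i))/k!`. -/
noncomputable def omegaBD (γ : ℝ) (k : ℕ) : ℝ :=
  (-1) ^ k * ((∏ i ∈ Finset.range k, (γ - i)) / (Nat.factorial k))

lemma omegaBD_zero (γ : ℝ) : omegaBD γ 0 = 1 := by simp [omegaBD]

/-- auxiliary product -/
noncomputable def Bprod (γ : ℝ) (j : ℕ) : ℝ := ∏ i ∈ Finset.range j, ((i : ℝ) + 1 - γ)

lemma Bprod_nonneg {γ : ℝ} (h1 : γ < 1) (j : ℕ) : 0 ≤ Bprod γ j :=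
  Finset.prod_nonneg fun i _ => by
    have : (0:ℝ) ≤ i := Nat.cast_nonneg i
    linarith

lemma omegaBD_succ (γ : ℝ) (j : ℕ) :
    omegaBD γ (j+1) = -γ * Bprod γ j / (Nat.factorial (j+1)) := by
  rw [omegaBD, Finset.prod_range_succ']
  have h1 : ∏ i ∈ Finset.range j, (γ - ((i:ℕ)+1 : ℕ)) = (-1)^j * Bprod γ j := by
    have : ∀ i ∈ Finset.range j, (γ - ((i:ℕ)+1 : ℕ) : ℝ) = (-1) * ((i:ℝ) + 1 - γ) := by
      intro i _; push_cast; ring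
    rw [Finset.prod_congr rfl this, Finset.prod_mul_distrib, Finset.prod_const, Bprod,
      Finset.card_range]
  rw [h1]
  have h2 : ((-1:ℝ))^(j+1) * (-1)^j = -1 := by
    rw [← pow_add]
    exact Odd.neg_one_pow ⟨j, by ring⟩
  push_cast
  field_simp
  linear_combination (Bprod γ j * γ) * h2

lemma omegaBD_nonpos {γ : ℝ} (h0 : 0 ≤ γ) (h1 : γ < 1) (j : ℕ) :
    omegaBD γ (j+1) ≤ 0 := by
  rw [omegaBD_succ]
  apply div_nonpos_of_nonpos_of_nonneg
  · have := Bprod_nonneg h1 j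
    nlinarith
  · positivity

lemma omegaBD_partial_sum (γ : ℝ) (M : ℕ) :
    ∑ m ∈ Finset.range (M+1), omegaBD γ m = Bprod γ M / Nat.factorial M := by
  induction M with
  | zero => simp [omegaBD_zero, Bprod]
  | succ M ih =>
    rw [Finset.sum_range_succ, ih, omegaBD_succ]
    have hB : Bprod γ (M+1) = Bprod γ M * ((M:ℝ)+1-γ) := by
      rw [Bprod, Bprod, Finset.prod_range_succ]
    rw [hB]
    have hM : (Nat.factorial M : ℝ) ≠ 0 := Nat.cast_ne_zero.mpr (Nat.factorial_ne_zero M)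
    have hM1 : (Nat.factorial (M+1) : ℝ) ≠ 0 := Nat.cast_ne_zero.mpr (Nat.factorial_ne_zero _)
    have hfs : (Nat.factorial (M+1) : ℝ) = (M+1) * Nat.factorial M := by
      rw [Nat.factorial_succ]; push_cast; ring
    field_simp [hfs]
    rw [hfs]; ring

lemma omegaBD_partial_sum_nonneg {γ : ℝ} (h1 : γ < 1) (M : ℕ) :
    0 ≤ ∑ m ∈ Finset.range (M+1), omegaBD γ m := by
  rw [omegaBD_partial_sum]
  exact div_nonneg (Bprod_nonneg h1 M) (Nat.cast_nonneg _)
lemma tri_swap (n : ℕ) (g : ℕ → ℕ → ℝ) :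
    ∑ k ∈ Finset.range n, ∑ j ∈ Finset.range k, g k j
      = ∑ j ∈ Finset.range n, ∑ k ∈ Finset.Ico (j+1) n, g k j := by
  have h1 : ∀ k ∈ Finset.range n, ∑ j ∈ Finset.range k, g k j
      = ∑ j ∈ Finset.range n, if j < k then g k j else 0 := by
    intro k hk
    rw [← Finset.sum_filter]
    congr 1
    ext a
    simp only [Finset.mem_filter, Finset.mem_range] at *
    omega
  rw [Finset.sum_congr rfl h1, Finset.sum_comm]
  refine Finset.sum_congr rfl fun j _ => ?_
  rw [← Finset.sum_filter]
  congr 1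
  ext a
  simp only [Finset.mem_filter, Finset.mem_range, Finset.mem_Ico]
  omega

lemma pos_case {γ : ℝ} (h0 : 0 ≤ γ) (h1 : γ < 1) (n : ℕ) (u : ℕ → ℝ) :
    0 ≤ ∑ k ∈ Finset.range n, u k * ∑ j ∈ Finset.range (k + 1), omegaBD γ (k - j) * u j := by
  set A : ℕ → ℝ := fun k => ∑ j ∈ Finset.range k, omegaBD γ (j+1) with hAdef
  have hS : ∀ k, 0 ≤ 1 + A k := by
    intro k
    have h := omegaBD_partial_sum_nonneg h1 k
    rw [Finset.sum_range_succ'] at h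
    simpa [omegaBD_zero, add_comm] using h
  -- rewrite inner sums of ω over range k
  have hrefl : ∀ k, ∑ j ∈ Finset.range k, omegaBD γ (k - j) = A k := by
    intro k
    rw [hAdef]
    rw [← Finset.sum_range_reflect (fun j => omegaBD γ (k - j)) k]
    refine Finset.sum_congr rfl fun j hj => ?_
    have hj' : j < k := Finset.mem_range.mp hj
    congr 1
    omega
  -- Q ≥ T
  have hQT : ∑ k ∈ Finset.range n,
        ((u k)^2 + ∑ j ∈ Finset.range k, omegaBD γ (k - j) / 2 * ((u j)^2 + (u k)^2))
      ≤ ∑ k ∈ Finset.range n, u k * ∑ j ∈ Finset.range (k + 1), omegaBD γ (k - j) * u j := by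
    refine Finset.sum_le_sum fun k _ => ?_
    rw [Finset.mul_sum, Finset.sum_range_succ, Nat.sub_self, omegaBD_zero]
    have hterm : u k * (1 * u k) = (u k)^2 := by ring
    rw [hterm]
    rw [add_comm ((u k)^2)]
    apply add_le_add_left
    refine Finset.sum_le_sum fun j hj => ?_
    have hj' : j < k := Finset.mem_range.mp hj
    have hw : omegaBD γ (k - j) ≤ 0 := by
      have he : k - j - 1 + 1 = k - j := by omega
      have := omegaBD_nonpos h0 h1 (k - j - 1)
      rwa [he] at this
    nlinarith [sq_nonneg (u j - u k)]
  -- compute T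
  have hT : ∑ k ∈ Finset.range n,
        ((u k)^2 + ∑ j ∈ Finset.range k, omegaBD γ (k - j) / 2 * ((u j)^2 + (u k)^2))
      = ∑ k ∈ Finset.range n, (u k)^2 * ((1 + A k) + (1 + A (n - 1 - k))) / 2 := by
    have hsplit : ∀ k ∈ Finset.range n,
        (u k)^2 + ∑ j ∈ Finset.range k, omegaBD γ (k - j) / 2 * ((u j)^2 + (u k)^2)
        = ((u k)^2 + (u k)^2 * A k / 2) + ∑ j ∈ Finset.range k, omegaBD γ (k - j) * (u j)^2 / 2 := by
      intro k _
      have : ∑ j ∈ Finset.range k, omegaBD γ (k - j) / 2 * ((u j)^2 + (u k)^2)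
          = (∑ j ∈ Finset.range k, omegaBD γ (k - j) * (u j)^2 / 2)
            + (∑ j ∈ Finset.range k, omegaBD γ (k - j)) * (u k)^2 / 2 := by
        rw [Finset.sum_mul, Finset.sum_div, ← Finset.sum_add_distrib]
        refine Finset.sum_congr rfl fun j _ => by ring
      rw [this, hrefl]
      ring
    rw [Finset.sum_congr rfl hsplit, Finset.sum_add_distrib]
    have hswap : ∑ k ∈ Finset.range n, ∑ j ∈ Finset.range k, omegaBD γ (k - j) * (u j)^2 / 2
        = ∑ j ∈ Finset.range n, (u j)^2 * A (n - 1 - j) / 2 := by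
      rw [tri_swap]
      refine Finset.sum_congr rfl fun j hj => ?_
      have hj' : j < n := Finset.mem_range.mp hj
      rw [Finset.sum_Ico_eq_sum_range]
      have : ∀ i ∈ Finset.range (n - (j+1)), omegaBD γ (j + 1 + i - j) * (u j)^2 / 2
          = (u j)^2 * omegaBD γ (i + 1) / 2 := by
        intro i _
        have : j + 1 + i - j = i + 1 := by omega
        rw [this]; ring
      rw [Finset.sum_congr rfl this]
      have hn1 : n - (j+1) = n - 1 - j := by omega
      rw [hn1, show A (n - 1 - j) = ∑ x ∈ Finset.range (n - 1 - j), omegaBD γ (x+1) from rfl,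
        Finset.mul_sum, Finset.sum_div]
    rw [hswap, ← Finset.sum_add_distrib]
    refine Finset.sum_congr rfl fun k _ => by ring
  refine le_trans ?_ hQT
  rw [hT]
  refine Finset.sum_nonneg fun k _ => ?_
  have h2 : 0 ≤ (1 + A k) + (1 + A (n - 1 - k)) := by linarith [hS k, hS (n - 1 - k)]
  exact div_nonneg (mul_nonneg (sq_nonneg _) h2) (by norm_num)
lemma descP_eval (γ : ℝ) (k : ℕ) :
    (descPochhammer ℤ k).smeval γ = ∏ i ∈ Finset.range k, (γ - i) := by
  induction k with
  | zero => simp [descPochhammer_zero]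
  | succ k ih =>
    rw [descPochhammer_succ_right, Polynomial.smeval_mul, ih, Finset.prod_range_succ,
      Polynomial.smeval_sub, Polynomial.smeval_X]
    simp [Polynomial.smeval_natCast]

lemma ringchoose_eq (γ : ℝ) (k : ℕ) :
    Ring.choose γ k = (∏ i ∈ Finset.range k, (γ - i)) / (Nat.factorial k) := by
  have h := Ring.descPochhammer_eq_factorial_smul_choose γ k
  rw [descP_eval] at h
  rw [h, nsmul_eq_mul]
  have : (Nat.factorial k : ℝ) ≠ 0 := Nat.cast_ne_zero.mpr (Nat.factorial_ne_zero k)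
  field_simp

lemma omegaBD_eq (γ : ℝ) (k : ℕ) : omegaBD γ k = (-1) ^ k * Ring.choose γ k := by
  rw [omegaBD, ringchoose_eq]

lemma omegaBD_conv (a b : ℝ) (p : ℕ) :
    ∑ m ∈ Finset.range (p+1), omegaBD a m * omegaBD b (p-m) = omegaBD (a+b) p := by
  have h := Ring.add_choose_eq (r := a) (s := b) p (Commute.all a b)
  rw [Finset.Nat.sum_antidiagonal_eq_sum_range_succ_mk] at h
  rw [omegaBD_eq, h, Finset.mul_sum]
  refine Finset.sum_congr rfl fun m hm => ?_
  rw [omegaBD_eq, omegaBD_eq]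
  have hm' : m ≤ p := Nat.lt_succ_iff.mp (Finset.mem_range.mp hm)
  have hpow : (-1:ℝ)^p = (-1)^m * (-1)^(p-m) := by
    rw [← pow_add, Nat.add_sub_cancel' hm']
  rw [hpow]; ring

lemma omegaBD_self_zero (k : ℕ) : omegaBD 0 k = if k = 0 then 1 else 0 := by
  cases k with
  | zero => simp [omegaBD]
  | succ k =>
    simp only [omegaBD, Nat.succ_ne_zero, if_false]
    rw [Finset.prod_eq_zero (Finset.mem_range.mpr (Nat.succ_pos k)) (by simp)]
    simp

lemma tri_swap' (n : ℕ) (g : ℕ → ℕ → ℝ) :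
    ∑ k ∈ Finset.range n, ∑ j ∈ Finset.range (k+1), g k j
      = ∑ j ∈ Finset.range n, ∑ k ∈ Finset.Ico j n, g k j := by
  have h1 : ∀ k ∈ Finset.range n, ∑ j ∈ Finset.range (k+1), g k j
      = ∑ j ∈ Finset.range n, if j ≤ k then g k j else 0 := by
    intro k hk
    rw [← Finset.sum_filter]
    congr 1
    ext a
    simp only [Finset.mem_filter, Finset.mem_range] at *
    omega
  rw [Finset.sum_congr rfl h1, Finset.sum_comm]
  refine Finset.sum_congr rfl fun j _ => ?_
  rw [← Finset.sum_filter]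
  congr 1
  ext a
  simp only [Finset.mem_filter, Finset.mem_range, Finset.mem_Ico]
  omega

/-- Positive semidefiniteness of the lower-triangular Toeplitz quadratic form generated
by the coefficients of `(1-x)^γ`, `γ ∈ (-1,1)`. -/
theorem toeplitz_psd (γ : ℝ) (hγ : -1 < γ ∧ γ < 1) (n : ℕ) (hn : 1 ≤ n) (u : ℕ → ℝ) :
    0 ≤ ∑ k ∈ Finset.range n, u k * ∑ j ∈ Finset.range (k + 1), omegaBD γ (k - j) * u j := by
  obtain ⟨hlo, hhi⟩ := hγ
  rcases le_or_gt 0 γ with h | h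
  · exact pos_case h hhi n u
  · set β : ℝ := -γ with hβ
    have hβ0 : 0 ≤ β := by simp [hβ]; linarith
    have hβ1 : β < 1 := by simp [hβ]; linarith
    set v : ℕ → ℝ := fun k => ∑ j ∈ Finset.range (k+1), omegaBD γ (k - j) * u j with hv
    have hinv : ∀ k, ∑ j ∈ Finset.range (k+1), omegaBD β (k-j) * v j = u k := by
      intro k
      have step1 : ∑ j ∈ Finset.range (k+1), omegaBD β (k-j) * v j
          = ∑ j ∈ Finset.range (k+1), ∑ i ∈ Finset.range (j+1),
              omegaBD β (k-j) * (omegaBD γ (j-i) * u i) := by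
        refine Finset.sum_congr rfl fun j _ => ?_
        rw [show v j = ∑ i ∈ Finset.range (j+1), omegaBD γ (j - i) * u i from rfl,
          Finset.mul_sum]
      rw [step1, tri_swap' (k+1)]
      have step2 : ∀ i ∈ Finset.range (k+1),
          ∑ j ∈ Finset.Ico i (k+1), omegaBD β (k-j) * (omegaBD γ (j-i) * u i)
          = (if k - i = 0 then (1:ℝ) else 0) * u i := by
        intro i hi
        have hik : i ≤ k := Nat.lt_succ_iff.mp (Finset.mem_range.mp hi)
        rw [Finset.sum_Ico_eq_sum_range]
        have hlen : k + 1 - i = (k - i) + 1 := by omega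
        rw [hlen]
        have hterm : ∀ m ∈ Finset.range ((k-i)+1),
            omegaBD β (k - (i+m)) * (omegaBD γ (i+m-i) * u i)
            = omegaBD γ m * omegaBD β ((k-i) - m) * u i := by
          intro m hm
          have e1 : k - (i+m) = (k-i) - m := by omega
          have e2 : i+m-i = m := by omega
          rw [e1, e2]; ring
        rw [Finset.sum_congr rfl hterm, ← Finset.sum_mul, omegaBD_conv]
        have : γ + β = 0 := by simp [hβ]
        rw [this, omegaBD_self_zero]
      rw [Finset.sum_congr rfl step2]
      rw [Finset.sum_eq_single_of_mem k (Finset.self_mem_range_succ k)]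
      · simp
      · intro i hi hne
        have : k - i ≠ 0 := by
          have := Finset.mem_range.mp hi; omega
        simp [this]
    have hpos := pos_case hβ0 hβ1 n v
    have hQ : ∑ k ∈ Finset.range n, u k * ∑ j ∈ Finset.range (k + 1), omegaBD γ (k - j) * u j
        = ∑ k ∈ Finset.range n, v k * ∑ j ∈ Finset.range (k+1), omegaBD β (k-j) * v j := by
      refine Finset.sum_congr rfl fun k _ => ?_
      rw [hinv k, show v k = ∑ j ∈ Finset.range (k+1), omegaBD γ (k - j) * u j from rfl]
      ring
    rw [hQ]
    exact hpos
end

section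
/- Summability of FBDF weights for positive order: for $0 < \gamma < 1$, the coefficients of $\omega^{(\gamma)}(x) = ((3/2) - 2x + x^2/2)^{\gamma}$ satisfy $\omega_k^{(\gamma)} = O(k^{-\gamma-1})$ as $k \to \infty$; in particular $\sum_{k=0}^{\infty} |\omega_k^{(\gamma)}| < \infty$. -/
/-- Taylor coefficients of the FBDF generating function
`ω^(γ)(x) = (3/2 - 2x + x²/2)^γ` at `x = 0`. -/
noncomputable def fbdfCoeff (γ : ℝ) (k : ℕ) : ℝ :=
  iteratedDeriv k (fun x : ℝ => (3 / 2 - 2 * x + x ^ 2 / 2) ^ γ) 0 / Nat.factorial k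

open Finset Filter

namespace FBDF

noncomputable def P (γ : ℝ) (n : ℕ) : ℝ := ∏ j ∈ Finset.range n, (γ - j)
noncomputable def u (γ : ℝ) (i : ℕ) (x : ℝ) : ℝ := (-1 : ℝ)^i * P γ i * (1 - x) ^ (γ - i)
noncomputable def v (γ : ℝ) (j : ℕ) (x : ℝ) : ℝ := (-(1/3) : ℝ)^j * P γ j * (1 - x/3) ^ (γ - j)

lemma hasDerivAt_u (γ : ℝ) (i : ℕ) {x : ℝ} (hx : x < 1) :
    HasDerivAt (u γ i) (u γ (i+1) x) x := by
  have h0 : (0:ℝ) < 1 - x := by linarith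
  have h1 : HasDerivAt (fun y : ℝ => 1 - y) (-1 : ℝ) x := by
    simpa using (hasDerivAt_id x).const_sub (1:ℝ)
  have h2 : HasDerivAt (fun y : ℝ => (1 - y) ^ (γ - i)) ((-1) * (γ - i) * (1 - x) ^ (γ - i - 1)) x :=
    h1.rpow_const (Or.inl h0.ne')
  have h3 := h2.const_mul ((-1 : ℝ)^i * P γ i)
  convert h3 using 1
  iterate 3 rfl
  have hP : P γ (i+1) = P γ i * (γ - i) := Finset.prod_range_succ _ _
  have he : γ - ((i:ℝ) + 1) = γ - i - 1 := by ring
  simp only [u, hP, pow_succ]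
  push_cast
  rw [he]
  ring

lemma hasDerivAt_v (γ : ℝ) (j : ℕ) {x : ℝ} (hx : x < 1) :
    HasDerivAt (v γ j) (v γ (j+1) x) x := by
  have h0 : (0:ℝ) < 1 - x/3 := by linarith
  have h1 : HasDerivAt (fun y : ℝ => 1 - y/3) (-(1/3) : ℝ) x := by
    simpa using ((hasDerivAt_id x).div_const 3).const_sub (1:ℝ)
  have h2 : HasDerivAt (fun y : ℝ => (1 - y/3) ^ (γ - j))
      ((-(1/3)) * (γ - j) * (1 - x/3) ^ (γ - j - 1)) x :=
    h1.rpow_const (Or.inl h0.ne')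
  have h3 := h2.const_mul ((-(1/3) : ℝ)^j * P γ j)
  convert h3 using 1
  iterate 3 rfl
  have hP : P γ (j+1) = P γ j * (γ - j) := Finset.prod_range_succ _ _
  have he : γ - ((j:ℝ) + 1) = γ - j - 1 := by ring
  simp only [v, hP, pow_succ]
  push_cast
  rw [he]
  ring


/-- Pascal-type recombination. -/
lemma pascal_sum (γ : ℝ) (n : ℕ) (x : ℝ) :
    ∑ i ∈ range (n+1), (n.choose i : ℝ) *
        (u γ (i+1) x * v γ (n-i) x + u γ i x * v γ (n-i+1) x) =
      ∑ i ∈ range (n+2), ((n+1).choose i : ℝ) * u γ i x * v γ (n+1-i) x := by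
  have hR : ∑ i ∈ range (n+2), ((n+1).choose i : ℝ) * u γ i x * v γ (n+1-i) x
      = ∑ i ∈ range (n+1), ((n+1).choose (i+1) : ℝ) * u γ (i+1) x * v γ (n-i) x
        + u γ 0 x * v γ (n+1) x := by
    rw [Finset.sum_range_succ' _ (n+1)]
    simp
  rw [hR]
  simp only [mul_add, Finset.sum_add_distrib]
  have hL2 : ∑ i ∈ range (n+1), (n.choose i : ℝ) * (u γ i x * v γ (n-i+1) x)
      = ∑ i ∈ range (n+1), (n.choose (i+1) : ℝ) * (u γ (i+1) x * v γ (n-i) x)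
        + u γ 0 x * v γ (n+1) x := by
    rw [Finset.sum_range_succ' _ n]
    have : ∑ i ∈ range (n+1), (n.choose (i+1) : ℝ) * (u γ (i+1) x * v γ (n-i) x)
        = ∑ i ∈ range n, (n.choose (i+1) : ℝ) * (u γ (i+1) x * v γ (n-i) x) := by
      rw [Finset.sum_range_succ]
      simp
    rw [this]
    congr 1
    · apply Finset.sum_congr rfl
      intro i hi
      simp only [Finset.mem_range] at hi
      have : n - (i+1) + 1 = n - i := by omega
      rw [this]
    · simp
  rw [hL2]
  rw [← add_assoc]
  congr 1
  rw [← Finset.sum_add_distrib]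
  apply Finset.sum_congr rfl
  intro i hi
  have : ((n+1).choose (i+1) : ℝ) = (n.choose i : ℝ) + (n.choose (i+1) : ℝ) := by
    rw [Nat.choose_succ_succ]; push_cast; ring
  rw [this]
  ring

lemma main_formula (γ : ℝ) (hγ0 : 0 < γ) (n : ℕ) :
    ∀ x ∈ Set.Iio (1:ℝ),
      iteratedDeriv n (fun x : ℝ => (3 / 2 - 2 * x + x ^ 2 / 2) ^ γ) x
        = (3/2 : ℝ) ^ γ * ∑ i ∈ range (n+1), (n.choose i : ℝ) * u γ i x * v γ (n-i) x := by
  induction n with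
  | zero =>
    intro x hx
    simp only [Set.mem_Iio] at hx
    have h1 : (0:ℝ) ≤ 1 - x := by linarith
    have h2 : (0:ℝ) ≤ 1 - x/3 := by linarith
    simp only [iteratedDeriv_zero, range_one, Finset.sum_singleton, Nat.choose_self]
    have hq : (3 / 2 - 2 * x + x ^ 2 / 2 : ℝ) = (3/2) * ((1-x) * (1-x/3)) := by ring
    rw [hq, Real.mul_rpow (by norm_num) (mul_nonneg h1 h2), Real.mul_rpow h1 h2]
    simp [u, v, P]
  | succ n ih =>
    intro x hx
    simp only [Set.mem_Iio] at hx
    rw [iteratedDeriv_succ]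
    have hev : iteratedDeriv n (fun x : ℝ => (3 / 2 - 2 * x + x ^ 2 / 2) ^ γ)
        =ᶠ[nhds x] fun y => (3/2 : ℝ) ^ γ * ∑ i ∈ range (n+1),
            (n.choose i : ℝ) * u γ i y * v γ (n-i) y := by
      filter_upwards [Iio_mem_nhds hx] with y hy
      exact ih y hy
    rw [hev.deriv_eq]
    have hsum : HasDerivAt (fun y => ∑ i ∈ range (n+1), (n.choose i : ℝ) * u γ i y * v γ (n-i) y)
        (∑ i ∈ range (n+1), (n.choose i : ℝ) *
          (u γ (i+1) x * v γ (n-i) x + u γ i x * v γ (n-i+1) x)) x := by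
      apply HasDerivAt.fun_sum
      intro i _
      have h := ((hasDerivAt_u γ i hx).mul (hasDerivAt_v γ (n-i) hx)).const_mul (n.choose i : ℝ)
      have harr : (n.choose i : ℝ) * (u γ (i+1) x * v γ (n-i) x + u γ i x * v γ (n-i+1) x)
          = (n.choose i : ℝ) * (u γ (i+1) x * v γ (n-i) x + u γ i x * v γ ((n-i)+1) x) := rfl
      rw [harr]
      simpa [mul_assoc, mul_add, add_mul, mul_comm, mul_left_comm] using h
    rw [deriv_const_mul _ hsum.differentiableAt, hsum.deriv, pascal_sum]


lemma geom_le (n : ℕ) : ∑ j ∈ range n, (1/3:ℝ)^j ≤ 3/2 := by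
  have h := Summable.sum_le_tsum (range n) (fun i _ => by positivity)
    (summable_geometric_of_lt_one (by norm_num : (0:ℝ) ≤ 1/3) (by norm_num))
  calc ∑ j ∈ range n, (1/3:ℝ)^j ≤ ∑' j : ℕ, (1/3:ℝ)^j := h
    _ = (1 - 1/3)⁻¹ := tsum_geometric_of_lt_one (by norm_num) (by norm_num)
    _ ≤ 3/2 := by norm_num


section
variable {γ : ℝ} (hγ0 : 0 < γ) (hγ1 : γ < 1)
include hγ0 hγ1

lemma alpha_le_one (i : ℕ) : |P γ i| / (Nat.factorial i : ℝ) ≤ 1 := by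
  induction i with
  | zero => simp [P]
  | succ m ih =>
    have hP : P γ (m+1) = P γ m * (γ - m) := Finset.prod_range_succ _ _
    have habs : |γ - (m:ℝ)| ≤ (m:ℝ) + 1 := by
      rw [abs_le]
      constructor <;> [nlinarith [Nat.cast_nonneg (α := ℝ) m];
        nlinarith [Nat.cast_nonneg (α := ℝ) m]]
    have hfac : (Nat.factorial (m+1) : ℝ) = ((m:ℝ)+1) * (Nat.factorial m : ℝ) := by
      rw [Nat.factorial_succ]; push_cast; ring
    rw [hP, abs_mul, hfac]
    rw [div_le_one (by positivity)] at ih ⊢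
    calc |P γ m| * |γ - (m:ℝ)| ≤ (Nat.factorial m : ℝ) * ((m:ℝ)+1) :=
          mul_le_mul ih habs (abs_nonneg _) (by positivity)
      _ = ((m:ℝ)+1) * (Nat.factorial m : ℝ) := by ring

lemma log_le_harmonic (m : ℕ) :
    Real.log ((m:ℝ)+1) ≤ ∑ j ∈ range m, 1/((j:ℝ)+1) := by
  induction m with
  | zero => simp
  | succ m ih =>
    rw [Finset.sum_range_succ]
    have h1 : Real.log ((m:ℝ)+1+1) - Real.log ((m:ℝ)+1) ≤ 1/((m:ℝ)+1) := by
      rw [← Real.log_div (by positivity) (by positivity)]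
      have := Real.log_le_sub_one_of_pos
        (show (0:ℝ) < ((m:ℝ)+1+1)/((m:ℝ)+1) by positivity)
      have heq : ((m:ℝ)+1+1)/((m:ℝ)+1) - 1 = 1/((m:ℝ)+1) := by
        field_simp
        ring
      linarith
    push_cast
    linarith

lemma absP_succ (m : ℕ) :
    |P γ (m+1)| = γ * ∏ j ∈ range m, ((j:ℝ) + 1 - γ) := by
  have h : P γ (m+1) = (∏ j ∈ range m, (γ - ((j:ℝ)+1))) * γ := by
    rw [P, Finset.prod_range_succ' (fun j => (γ - (j:ℕ)))]
    push_cast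
    rw [sub_zero]
  have h2 : (∏ j ∈ range m, (γ - ((j:ℝ)+1))) = (-1:ℝ)^m * ∏ j ∈ range m, ((j:ℝ)+1-γ) :=
    calc (∏ j ∈ range m, (γ - ((j:ℝ)+1)))
        = ∏ j ∈ range m, (-1:ℝ) * ((j:ℝ)+1-γ) := Finset.prod_congr rfl (fun j _ => by ring)
      _ = (-1:ℝ)^m * ∏ j ∈ range m, ((j:ℝ)+1-γ) := by
          rw [Finset.prod_mul_distrib, Finset.prod_const, Finset.card_range]
  rw [h, h2, abs_mul, abs_mul, abs_pow, abs_neg, abs_one, one_pow, one_mul,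
    abs_of_pos hγ0, abs_of_nonneg]
  · ring
  · exact Finset.prod_nonneg fun j _ => by
      have : (0:ℝ) ≤ (j:ℝ) := Nat.cast_nonneg j
      linarith

lemma prod_le (m : ℕ) :
    ∏ j ∈ range m, ((j:ℝ) + 1 - γ) ≤ (Nat.factorial m : ℝ) * ((m:ℝ)+1) ^ (-γ) := by
  have hfac : (Nat.factorial m : ℝ) = ∏ j ∈ range m, ((j:ℝ)+1) := by
    rw [← Finset.prod_range_add_one_eq_factorial]
    push_cast
    rfl
  have h1 : ∏ j ∈ range m, ((j:ℝ) + 1 - γ)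
      = (Nat.factorial m : ℝ) * ∏ j ∈ range m, (1 - γ/((j:ℝ)+1)) := by
    rw [hfac, ← Finset.prod_mul_distrib]
    apply Finset.prod_congr rfl
    intro j _
    field_simp
  have h2 : ∏ j ∈ range m, (1 - γ/((j:ℝ)+1)) ≤ ((m:ℝ)+1) ^ (-γ) := by
    have hstep : ∏ j ∈ range m, (1 - γ/((j:ℝ)+1))
        ≤ ∏ j ∈ range m, Real.exp (-(γ/((j:ℝ)+1))) := by
      apply Finset.prod_le_prod
      · intro j _
        have hj : (1:ℝ) ≤ (j:ℝ)+1 := by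
          have := Nat.cast_nonneg (α := ℝ) j; linarith
        have : γ/((j:ℝ)+1) ≤ γ := by
          rw [div_le_iff₀ (by linarith)]
          nlinarith
        linarith
      · intro j _
        have := Real.add_one_le_exp (-(γ/((j:ℝ)+1)))
        linarith
    have hexp : ∏ j ∈ range m, Real.exp (-(γ/((j:ℝ)+1)))
        = Real.exp (-(γ * ∑ j ∈ range m, 1/((j:ℝ)+1))) := by
      rw [← Real.exp_sum]
      congr 1
      rw [Finset.mul_sum, ← Finset.sum_neg_distrib]
      apply Finset.sum_congr rfl
      intro j _; field_simp
    have hlog := log_le_harmonic hγ0 hγ1 m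
    have hmono : Real.exp (-(γ * ∑ j ∈ range m, 1/((j:ℝ)+1)))
        ≤ Real.exp (-(γ * Real.log ((m:ℝ)+1))) := by
      apply Real.exp_le_exp.mpr
      have := mul_le_mul_of_nonneg_left hlog hγ0.le
      linarith
    have hrpow : Real.exp (-(γ * Real.log ((m:ℝ)+1))) = ((m:ℝ)+1) ^ (-γ) := by
      rw [Real.rpow_def_of_pos (by positivity)]
      ring_nf
    calc ∏ j ∈ range m, (1 - γ/((j:ℝ)+1)) ≤ _ := hstep
      _ = _ := hexp
      _ ≤ _ := hmono
      _ = _ := hrpow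
  calc ∏ j ∈ range m, ((j:ℝ) + 1 - γ)
      = (Nat.factorial m : ℝ) * ∏ j ∈ range m, (1 - γ/((j:ℝ)+1)) := h1
    _ ≤ (Nat.factorial m : ℝ) * (((m:ℝ)+1) ^ (-γ)) :=
        mul_le_mul_of_nonneg_left h2 (by positivity)

lemma alpha_le (m : ℕ) :
    |P γ (m+1)| / (Nat.factorial (m+1) : ℝ) ≤ γ * ((m:ℝ)+1) ^ (-γ-1) := by
  have h1 := absP_succ hγ0 hγ1 m
  have h2 := prod_le hγ0 hγ1 m
  have hfac : (Nat.factorial (m+1) : ℝ) = ((m:ℝ)+1) * (Nat.factorial m : ℝ) := by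
    rw [Nat.factorial_succ]; push_cast; ring
  have hsplit : ((m:ℝ)+1) ^ (-γ-1) = ((m:ℝ)+1) ^ (-γ) * ((m:ℝ)+1)⁻¹ := by
    rw [show (-γ-1 : ℝ) = -γ + (-1) by ring, Real.rpow_add (by positivity),
      Real.rpow_neg_one]
  rw [h1, hfac, hsplit]
  rw [div_le_iff₀ (by positivity)]
  have hm1 : (0:ℝ) < (m:ℝ)+1 := by positivity
  have key : γ * (∏ j ∈ range m, ((j:ℝ) + 1 - γ))
      ≤ γ * ((Nat.factorial m : ℝ) * ((m:ℝ)+1) ^ (-γ)) :=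
    mul_le_mul_of_nonneg_left h2 hγ0.le
  calc γ * ∏ j ∈ range m, ((j:ℝ) + 1 - γ)
      ≤ γ * ((Nat.factorial m : ℝ) * ((m:ℝ)+1) ^ (-γ)) := key
    _ = γ * (((m:ℝ)+1) ^ (-γ) * ((m:ℝ)+1)⁻¹) * (((m:ℝ)+1) * (Nat.factorial m : ℝ)) := by
        field_simp


lemma T_bound : ∃ C : ℝ, 0 < C ∧ ∀ k : ℕ, 1 ≤ k →
    ∑ i ∈ range (k+1), (|P γ i| / (Nat.factorial i : ℝ)) * (1/3:ℝ)^(k-i)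
      ≤ C * (k:ℝ) ^ (-γ-1) := by
  set θ : ℝ := (1/3:ℝ) ^ ((2:ℝ)⁻¹) with hθdef
  have hθ0 : 0 ≤ θ := Real.rpow_nonneg (by norm_num) _
  have hθ1 : θ < 1 := Real.rpow_lt_one (by norm_num) (by norm_num) (by norm_num)
  obtain ⟨M, hM⟩ := (tendsto_pow_const_mul_const_pow_of_lt_one 3 hθ0 hθ1).bddAbove_range
  rw [mem_upperBounds] at hM
  have hMk : ∀ k : ℕ, (k:ℝ)^(3:ℕ) * θ^k ≤ M := fun k => hM _ ⟨k, rfl⟩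
  have hM0 : (0:ℝ) ≤ M := le_trans (by norm_num) (hMk 0)
  refine ⟨2*M + 6 + 1, by positivity, ?_⟩
  intro k hk
  have hk0 : (0:ℝ) < (k:ℝ) := by exact_mod_cast hk
  have hkr : (0:ℝ) < (k:ℝ) ^ (-γ-1) := Real.rpow_pos_of_pos hk0 _
  -- split the sum
  rw [← Finset.sum_filter_add_sum_filter_not (range (k+1)) (fun i => 2*i < k)]
  have hS1 : ∑ i ∈ (range (k+1)).filter (fun i => 2*i < k),
      (|P γ i| / (Nat.factorial i : ℝ)) * (1/3:ℝ)^(k-i) ≤ (2*M) * (k:ℝ) ^ (-γ-1) := by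
    have hterm : ∀ i ∈ (range (k+1)).filter (fun i => 2*i < k),
        (|P γ i| / (Nat.factorial i : ℝ)) * (1/3:ℝ)^(k-i) ≤ θ^k := by
      intro i hi
      simp only [Finset.mem_filter, Finset.mem_range] at hi
      have h2i : 2*i < k := hi.2
      have hik : i ≤ k := by omega
      have hcast : ((k - i : ℕ) : ℝ) = (k:ℝ) - (i:ℝ) := by
        push_cast [Nat.cast_sub hik]; ring
      have hpow : (1/3:ℝ)^(k-i) ≤ θ^k := by
        have e1 : (1/3:ℝ)^(k-i) = (1/3:ℝ) ^ (((k-i:ℕ)):ℝ) := (Real.rpow_natCast _ _).symm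
        have e2 : θ^k = (1/3:ℝ) ^ ((k:ℝ)/2) := by
          rw [hθdef, ← Real.rpow_natCast ((1/3:ℝ) ^ ((2:ℝ)⁻¹)) k,
            ← Real.rpow_mul (by norm_num)]
          congr 1
          ring
        rw [e1, e2]
        apply Real.rpow_le_rpow_of_exponent_ge (by norm_num) (by norm_num)
        rw [hcast]
        have : (2*i : ℕ) < k := h2i
        have : ((i:ℝ)) < (k:ℝ)/2 := by
          have : ((2*i : ℕ) : ℝ) < (k:ℝ) := by exact_mod_cast this
          push_cast at this
          linarith
        linarith
      calc (|P γ i| / (Nat.factorial i : ℝ)) * (1/3:ℝ)^(k-i)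
          ≤ 1 * (1/3:ℝ)^(k-i) :=
            mul_le_mul_of_nonneg_right (alpha_le_one hγ0 hγ1 i) (by positivity)
        _ = (1/3:ℝ)^(k-i) := one_mul _
        _ ≤ θ^k := hpow
    calc ∑ i ∈ (range (k+1)).filter (fun i => 2*i < k),
        (|P γ i| / (Nat.factorial i : ℝ)) * (1/3:ℝ)^(k-i)
        ≤ ∑ _i ∈ (range (k+1)).filter (fun i => 2*i < k), θ^k := Finset.sum_le_sum hterm
      _ = ((range (k+1)).filter (fun i => 2*i < k)).card * θ^k := by
          rw [Finset.sum_const, nsmul_eq_mul]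
      _ ≤ ((k:ℝ)+1) * θ^k := by
          apply mul_le_mul_of_nonneg_right _ (pow_nonneg hθ0 _)
          have := Finset.card_filter_le (range (k+1)) (fun i => 2*i < k)
          have h2 := this.trans (le_of_eq (Finset.card_range (k+1)))
          exact_mod_cast h2
      _ ≤ (2*(k:ℝ)) * θ^k := by
          apply mul_le_mul_of_nonneg_right _ (pow_nonneg hθ0 _)
          have : (1:ℝ) ≤ (k:ℝ) := by exact_mod_cast hk
          linarith
      _ ≤ (2*M) * (k:ℝ) ^ (-γ-1) := by
          have hkey : (k:ℝ) ≤ (k:ℝ)^(3:ℕ) * (k:ℝ) ^ (-γ-1) := by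
            have h3 : (k:ℝ) ^ (2-γ : ℝ) = (k:ℝ)^(3:ℕ) * (k:ℝ) ^ (-γ-1) := by
              rw [← Real.rpow_natCast (k:ℝ) 3, ← Real.rpow_add hk0]
              congr 1
              push_cast
              ring
            calc (k:ℝ) = (k:ℝ) ^ (1:ℝ) := (Real.rpow_one _).symm
              _ ≤ (k:ℝ) ^ (2-γ : ℝ) :=
                Real.rpow_le_rpow_of_exponent_le (by exact_mod_cast hk) (by linarith)
              _ = (k:ℝ)^(3:ℕ) * (k:ℝ) ^ (-γ-1) := h3
          calc (2*(k:ℝ)) * θ^k ≤ (2*((k:ℝ)^(3:ℕ) * (k:ℝ) ^ (-γ-1))) * θ^k := by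
                apply mul_le_mul_of_nonneg_right _ (pow_nonneg hθ0 _)
                linarith
            _ = 2 * ((k:ℝ)^(3:ℕ) * θ^k) * (k:ℝ) ^ (-γ-1) := by ring
            _ ≤ 2 * M * (k:ℝ) ^ (-γ-1) := by
                apply mul_le_mul_of_nonneg_right _ hkr.le
                have := hMk k
                linarith
  have hS2 : ∑ i ∈ (range (k+1)).filter (fun i => ¬ 2*i < k),
      (|P γ i| / (Nat.factorial i : ℝ)) * (1/3:ℝ)^(k-i) ≤ 6 * (k:ℝ) ^ (-γ-1) := by
    have hterm : ∀ i ∈ (range (k+1)).filter (fun i => ¬ 2*i < k),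
        (|P γ i| / (Nat.factorial i : ℝ)) * (1/3:ℝ)^(k-i)
          ≤ (4 * (k:ℝ) ^ (-γ-1)) * (1/3:ℝ)^(k-i) := by
      intro i hi
      simp only [Finset.mem_filter, Finset.mem_range, not_lt] at hi
      have h2i : k ≤ 2*i := hi.2
      have hi1 : 1 ≤ i := by omega
      obtain ⟨m, rfl⟩ : ∃ m, i = m + 1 := ⟨i - 1, by omega⟩
      have halpha := alpha_le hγ0 hγ1 m
      have hi0 : (0:ℝ) < (m:ℝ)+1 := by positivity
      have hhalf : (k:ℝ) ≤ 2*((m:ℝ)+1) := by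
        have : ((k:ℕ):ℝ) ≤ ((2*(m+1) : ℕ) : ℝ) := by exact_mod_cast h2i
        push_cast at this
        linarith
      have hmono : ((m:ℝ)+1) ^ (-γ-1) ≤ 4 * (k:ℝ) ^ (-γ-1) := by
        have hs : (0:ℝ) < γ + 1 := by linarith
        have e1 : ((m:ℝ)+1) ^ (-γ-1) = (((m:ℝ)+1) ^ (γ+1))⁻¹ := by
          rw [← Real.rpow_neg hi0.le]
          congr 1
          ring
        have e2 : (k:ℝ) ^ (-γ-1) = ((k:ℝ) ^ (γ+1))⁻¹ := by
          rw [← Real.rpow_neg hk0.le]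
          congr 1
          ring
        rw [e1, e2]
        have hup : (k:ℝ) ^ (γ+1) ≤ 4 * ((m:ℝ)+1) ^ (γ+1) := by
          calc (k:ℝ) ^ (γ+1) ≤ (2*((m:ℝ)+1)) ^ (γ+1) :=
                Real.rpow_le_rpow hk0.le hhalf (by linarith)
            _ = (2:ℝ)^(γ+1) * ((m:ℝ)+1) ^ (γ+1) := Real.mul_rpow (by norm_num) hi0.le
            _ ≤ 4 * ((m:ℝ)+1) ^ (γ+1) := by
                apply mul_le_mul_of_nonneg_right _ (Real.rpow_nonneg hi0.le _)
                calc (2:ℝ)^(γ+1) ≤ (2:ℝ)^(2:ℝ) :=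
                      Real.rpow_le_rpow_of_exponent_le (by norm_num) (by linarith)
                  _ = 4 := by
                      rw [show ((2:ℝ):ℝ)^(2:ℝ) = (2:ℝ)^((2:ℕ):ℝ) by norm_num,
                        Real.rpow_natCast]
                      norm_num
        have hkp : (0:ℝ) < (k:ℝ) ^ (γ+1) := Real.rpow_pos_of_pos hk0 _
        have hmp : (0:ℝ) < ((m:ℝ)+1) ^ (γ+1) := Real.rpow_pos_of_pos hi0 _
        have h5 : (k:ℝ)^(γ+1) / 4 ≤ ((m:ℝ)+1)^(γ+1) := by
          linarith
        have := inv_anti₀ (by positivity : (0:ℝ) < (k:ℝ)^(γ+1)/4) h5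
        rw [inv_div] at this
        calc (((m:ℝ)+1) ^ (γ+1))⁻¹ ≤ 4 / (k:ℝ)^(γ+1) := this
          _ = 4 * ((k:ℝ)^(γ+1))⁻¹ := by rw [div_eq_mul_inv]
      calc (|P γ (m+1)| / (Nat.factorial (m+1) : ℝ)) * (1/3:ℝ)^(k-(m+1))
          ≤ (γ * ((m:ℝ)+1) ^ (-γ-1)) * (1/3:ℝ)^(k-(m+1)) :=
            mul_le_mul_of_nonneg_right halpha (by positivity)
        _ ≤ (4 * (k:ℝ) ^ (-γ-1)) * (1/3:ℝ)^(k-(m+1)) := by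
            apply mul_le_mul_of_nonneg_right _ (by positivity)
            calc γ * ((m:ℝ)+1) ^ (-γ-1) ≤ 1 * ((m:ℝ)+1) ^ (-γ-1) := by
                  apply mul_le_mul_of_nonneg_right hγ1.le (Real.rpow_nonneg hi0.le _)
              _ = ((m:ℝ)+1) ^ (-γ-1) := one_mul _
              _ ≤ 4 * (k:ℝ) ^ (-γ-1) := hmono
    calc ∑ i ∈ (range (k+1)).filter (fun i => ¬ 2*i < k),
        (|P γ i| / (Nat.factorial i : ℝ)) * (1/3:ℝ)^(k-i)
        ≤ ∑ i ∈ (range (k+1)).filter (fun i => ¬ 2*i < k),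
            (4 * (k:ℝ) ^ (-γ-1)) * (1/3:ℝ)^(k-i) := Finset.sum_le_sum hterm
      _ = (4 * (k:ℝ) ^ (-γ-1)) * ∑ i ∈ (range (k+1)).filter (fun i => ¬ 2*i < k),
            (1/3:ℝ)^(k-i) := by rw [Finset.mul_sum]
      _ ≤ (4 * (k:ℝ) ^ (-γ-1)) * (3/2) := by
          apply mul_le_mul_of_nonneg_left _ (by positivity)
          calc ∑ i ∈ (range (k+1)).filter (fun i => ¬ 2*i < k), (1/3:ℝ)^(k-i)
              ≤ ∑ i ∈ range (k+1), (1/3:ℝ)^(k-i) :=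
                Finset.sum_le_sum_of_subset_of_nonneg (Finset.filter_subset _ _)
                  (fun i _ _ => by positivity)
            _ = ∑ j ∈ range (k+1), (1/3:ℝ)^j := by
                rw [← Finset.sum_range_reflect (fun j => (1/3:ℝ)^j) (k+1)]
                apply Finset.sum_congr rfl
                intro i hi
                simp only [Finset.mem_range] at hi
                have h9 : k + 1 - 1 - i = k - i := by omega
                rw [h9]
            _ ≤ 3/2 := geom_le (k+1)
      _ = 6 * (k:ℝ) ^ (-γ-1) := by ring
  calc _ ≤ (2*M) * (k:ℝ) ^ (-γ-1) + 6 * (k:ℝ) ^ (-γ-1) := add_le_add hS1 hS2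
    _ ≤ (2*M + 6 + 1) * (k:ℝ) ^ (-γ-1) := by nlinarith [hkr]

end

end FBDF


namespace FBDF
section
variable {γ : ℝ} (hγ0 : 0 < γ) (hγ1 : γ < 1)
include hγ0 hγ1

lemma coeff_abs_le (k : ℕ) :
    |fbdfCoeff γ k| ≤ (3/2) * ∑ i ∈ range (k+1),
      (|P γ i| / (Nat.factorial i : ℝ)) * (1/3:ℝ)^(k-i) := by
  have h0 : (0:ℝ) ∈ Set.Iio (1:ℝ) := by norm_num
  have hmain := main_formula γ hγ0 k 0 h0
  have hu : ∀ i, u γ i 0 = (-1:ℝ)^i * P γ i := by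
    intro i
    simp [u, Real.one_rpow]
  have hv : ∀ j, v γ j 0 = (-(1/3):ℝ)^j * P γ j := by
    intro j
    simp only [v]
    norm_num
  have hfacpos : (0:ℝ) < (Nat.factorial k : ℝ) := by positivity
  have hterm : ∀ i ∈ range (k+1),
      |(k.choose i : ℝ) * u γ i 0 * v γ (k-i) 0|
        ≤ (Nat.factorial k : ℝ) * ((|P γ i| / (Nat.factorial i : ℝ)) * (1/3:ℝ)^(k-i)) := by
    intro i hi
    simp only [Finset.mem_range] at hi
    have hik : i ≤ k := by omega
    rw [hu, hv]
    have habs : |(k.choose i : ℝ) * ((-1:ℝ)^i * P γ i) * ((-(1/3):ℝ)^(k-i) * P γ (k-i))|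
        = (k.choose i : ℝ) * |P γ i| * ((1/3:ℝ)^(k-i) * |P γ (k-i)|) := by
      rw [abs_mul, abs_mul, abs_mul, abs_mul, abs_pow, abs_pow, abs_neg, abs_neg,
        abs_one, one_pow, Nat.abs_cast, show |(1/3:ℝ)| = 1/3 from abs_of_nonneg (by norm_num)]
      ring
    rw [habs, Nat.cast_choose ℝ hik]
    have hf1 : (0:ℝ) < (Nat.factorial i : ℝ) := by positivity
    have hf2 : (0:ℝ) < (Nat.factorial (k-i) : ℝ) := by positivity
    have heq : (Nat.factorial k : ℝ) / ((Nat.factorial i : ℝ) * (Nat.factorial (k-i) : ℝ))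
          * |P γ i| * ((1/3:ℝ)^(k-i) * |P γ (k-i)|)
        = (Nat.factorial k : ℝ) * ((|P γ i| / (Nat.factorial i : ℝ)) * (1/3:ℝ)^(k-i))
          * (|P γ (k-i)| / (Nat.factorial (k-i) : ℝ)) := by
      field_simp
    rw [heq]

    calc (Nat.factorial k : ℝ) * ((|P γ i| / (Nat.factorial i : ℝ)) * (1/3:ℝ)^(k-i))
          * (|P γ (k-i)| / (Nat.factorial (k-i) : ℝ))
        ≤ (Nat.factorial k : ℝ) * ((|P γ i| / (Nat.factorial i : ℝ)) * (1/3:ℝ)^(k-i)) * 1 :=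
          mul_le_mul_of_nonneg_left (alpha_le_one hγ0 hγ1 (k-i)) (by positivity)
      _ = (Nat.factorial k : ℝ) * ((|P γ i| / (Nat.factorial i : ℝ)) * (1/3:ℝ)^(k-i)) :=
          mul_one _
  have hS : |∑ i ∈ range (k+1), (k.choose i : ℝ) * u γ i 0 * v γ (k-i) 0|
      ≤ (Nat.factorial k : ℝ) * ∑ i ∈ range (k+1),
          (|P γ i| / (Nat.factorial i : ℝ)) * (1/3:ℝ)^(k-i) := by
    calc |∑ i ∈ range (k+1), (k.choose i : ℝ) * u γ i 0 * v γ (k-i) 0|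
        ≤ ∑ i ∈ range (k+1), |(k.choose i : ℝ) * u γ i 0 * v γ (k-i) 0| :=
          Finset.abs_sum_le_sum_abs _ _
      _ ≤ ∑ i ∈ range (k+1), (Nat.factorial k : ℝ) *
            ((|P γ i| / (Nat.factorial i : ℝ)) * (1/3:ℝ)^(k-i)) := Finset.sum_le_sum hterm
      _ = (Nat.factorial k : ℝ) * ∑ i ∈ range (k+1),
            (|P γ i| / (Nat.factorial i : ℝ)) * (1/3:ℝ)^(k-i) := by rw [Finset.mul_sum]
  have hrg : |(3/2:ℝ)^γ| = (3/2:ℝ)^γ := abs_of_pos (Real.rpow_pos_of_pos (by norm_num) _)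
  have hrle : (3/2:ℝ)^γ ≤ 3/2 := by
    calc (3/2:ℝ)^γ ≤ (3/2:ℝ)^(1:ℝ) :=
          Real.rpow_le_rpow_of_exponent_le (by norm_num) (by linarith)
      _ = 3/2 := Real.rpow_one _
  rw [fbdfCoeff, hmain]
  rw [abs_div, abs_mul, hrg, abs_of_pos hfacpos, mul_div_assoc]
  apply mul_le_mul hrle _ (by positivity) (by norm_num)
  rw [div_le_iff₀ hfacpos]
  calc |∑ i ∈ range (k+1), (k.choose i : ℝ) * u γ i 0 * v γ (k-i) 0|
      ≤ (Nat.factorial k : ℝ) * ∑ i ∈ range (k+1),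
          (|P γ i| / (Nat.factorial i : ℝ)) * (1/3:ℝ)^(k-i) := hS
    _ = (∑ i ∈ range (k+1), (|P γ i| / (Nat.factorial i : ℝ)) * (1/3:ℝ)^(k-i))
          * (Nat.factorial k : ℝ) := by ring

end
end FBDF

/-- Summability of FBDF weights for positive order: for `0 < γ < 1`,
`ω_k^{(γ)} = O(k^{-γ-1})`; in particular `∑ |ω_k^{(γ)}| < ∞`. -/
theorem fbdf_weights_summable (γ : ℝ) (hγ : 0 < γ ∧ γ < 1) :
    (∃ C : ℝ, 0 < C ∧ ∀ k : ℕ, 1 ≤ k → |fbdfCoeff γ k| ≤ C * (k : ℝ) ^ (-γ - 1)) ∧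
    Summable (fun k : ℕ => |fbdfCoeff γ k|) := by
  obtain ⟨hγ0, hγ1⟩ := hγ
  obtain ⟨C₀, hC₀pos, hC₀⟩ := FBDF.T_bound hγ0 hγ1
  have hbound : ∀ k : ℕ, 1 ≤ k → |fbdfCoeff γ k| ≤ ((3/2) * C₀) * (k:ℝ) ^ (-γ - 1) := by
    intro k hk
    calc |fbdfCoeff γ k| ≤ (3/2) * ∑ i ∈ Finset.range (k+1),
          (|FBDF.P γ i| / (Nat.factorial i : ℝ)) * (1/3:ℝ)^(k-i) :=
        FBDF.coeff_abs_le hγ0 hγ1 k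
      _ ≤ (3/2) * (C₀ * (k:ℝ) ^ (-γ-1)) :=
        mul_le_mul_of_nonneg_left (hC₀ k hk) (by norm_num)
      _ = ((3/2) * C₀) * (k:ℝ) ^ (-γ - 1) := by ring
  refine ⟨⟨(3/2) * C₀, by positivity, hbound⟩, ?_⟩
  have hsum0 : Summable (fun n : ℕ => (n:ℝ) ^ (-γ-1)) :=
    Real.summable_nat_rpow.mpr (by linarith)
  have hsum1 : Summable (fun n : ℕ => ((3/2) * C₀) * ((n+1 : ℕ):ℝ) ^ (-γ-1)) :=
    (summable_nat_add_iff 1).mpr (hsum0.mul_left _)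
  have hshift : Summable (fun k : ℕ => |fbdfCoeff γ (k+1)|) := by
    apply Summable.of_nonneg_of_le (fun k => abs_nonneg _) _ hsum1
    intro k
    exact hbound (k+1) (by omega)
  exact (summable_nat_add_iff 1).mp hshift
end
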